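/- (Triangle reciprocity) For any finite additive abelian group F with f = |F| and any symmetric subset A ⊆ F with Ā = F \ A and ᾱ = |Ā|/f: f^{−3}·|{(x,y,z) ∈ F³ : x−y ∈ A, y−z ∈ A, x−z ∈ A}| + f^{−3}·|{(x,y,z) ∈ F³ : x−y ∈ Ā, y−z ∈ Ā, x−z ∈ Ā}| = 1 − 3ᾱ + 3ᾱ². -/

import Mathlib

open Finset

private lemma card_subtype_real {α : Type*} [Fintype α] (P : α → Prop) [DecidablePred P] :
    (Nat.card {x // P x} : ℝ) = ∑ x, if P x then (1 : ℝ) else 0 := by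
  rw [Nat.card_eq_fintype_card, Fintype.card_subtype, ← Finset.sum_boole]

private lemma sum_shift {F : Type*} [AddCommGroup F] [Fintype F] [DecidableEq F]
    (B : Finset F) (c : F) :
    ∑ v : F, (if c + v ∈ B then (1 : ℝ) else 0) = (B.card : ℝ) := by
  have h := Fintype.sum_equiv (Equiv.addLeft c)
      (fun v : F => if c + v ∈ B then (1 : ℝ) else 0)
      (fun w : F => if w ∈ B then (1 : ℝ) else 0) (fun v => rfl)
  rw [h, Finset.sum_boole]
  simp

private def chg (F : Type*) [AddCommGroup F] : F × F × F ≃ F × F × F where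
  toFun p := (p.1 - p.2.1, p.2.1 - p.2.2, p.2.2)
  invFun q := (q.1 + q.2.1 + q.2.2, q.2.1 + q.2.2, q.2.2)
  left_inv p := by
    refine Prod.ext ?_ (Prod.ext ?_ rfl) <;> simp <;> abel
  right_inv q := by
    refine Prod.ext ?_ (Prod.ext ?_ rfl) <;> simp

private lemma key_count {F : Type*} [AddCommGroup F] [Fintype F] [DecidableEq F]
    (B : Finset F) :
    ∑ p : F × F × F,
      ((if p.1 - p.2.1 ∉ B ∧ p.2.1 - p.2.2 ∉ B ∧ p.1 - p.2.2 ∉ B then (1 : ℝ) else 0) +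
       (if p.1 - p.2.1 ∈ B ∧ p.2.1 - p.2.2 ∈ B ∧ p.1 - p.2.2 ∈ B then (1 : ℝ) else 0))
    = (Fintype.card F : ℝ) ^ 3 - 3 * (Fintype.card F : ℝ) ^ 2 * B.card
        + 3 * (Fintype.card F : ℝ) * (B.card : ℝ) ^ 2 := by
  classical
  have hchg : ∑ p : F × F × F,
      ((if p.1 - p.2.1 ∉ B ∧ p.2.1 - p.2.2 ∉ B ∧ p.1 - p.2.2 ∉ B then (1 : ℝ) else 0) +
       (if p.1 - p.2.1 ∈ B ∧ p.2.1 - p.2.2 ∈ B ∧ p.1 - p.2.2 ∈ B then (1 : ℝ) else 0))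
    = ∑ q : F × F × F,
      ((if q.1 ∉ B ∧ q.2.1 ∉ B ∧ q.1 + q.2.1 ∉ B then (1 : ℝ) else 0) +
       (if q.1 ∈ B ∧ q.2.1 ∈ B ∧ q.1 + q.2.1 ∈ B then (1 : ℝ) else 0)) := by
    refine Fintype.sum_equiv (chg F) _ _ (fun p => ?_)
    have h3 : p.1 - p.2.2 = (p.1 - p.2.1) + (p.2.1 - p.2.2) := by abel
    simp only [chg, Equiv.coe_fn_mk, h3]
    congr
  rw [hchg]
  -- pointwise inclusion-exclusion
  have point : ∀ (u v : F),
      ((if u ∉ B ∧ v ∉ B ∧ u + v ∉ B then (1 : ℝ) else 0) +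
       (if u ∈ B ∧ v ∈ B ∧ u + v ∈ B then (1 : ℝ) else 0))
      = 1 - (if u ∈ B then (1:ℝ) else 0) - (if v ∈ B then (1:ℝ) else 0)
          - (if u + v ∈ B then (1:ℝ) else 0)
          + (if u ∈ B then (1:ℝ) else 0) * (if v ∈ B then (1:ℝ) else 0)
          + (if u ∈ B then (1:ℝ) else 0) * (if u + v ∈ B then (1:ℝ) else 0)
          + (if v ∈ B then (1:ℝ) else 0) * (if u + v ∈ B then (1:ℝ) else 0) := by
    intro u v
    by_cases h1 : u ∈ B <;> by_cases h2 : v ∈ B <;> by_cases h3 : u + v ∈ B <;>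
      simp [h1, h2, h3]
  have hB : ∑ v : F, (if v ∈ B then (1:ℝ) else 0) = (B.card : ℝ) := by
    rw [Finset.sum_boole]; simp
  -- reduce to a double sum
  have step1 : ∑ q : F × F × F,
      ((if q.1 ∉ B ∧ q.2.1 ∉ B ∧ q.1 + q.2.1 ∉ B then (1 : ℝ) else 0) +
       (if q.1 ∈ B ∧ q.2.1 ∈ B ∧ q.1 + q.2.1 ∈ B then (1 : ℝ) else 0))
    = (Fintype.card F : ℝ) * ∑ u : F, ∑ v : F,
      ((if u ∉ B ∧ v ∉ B ∧ u + v ∉ B then (1 : ℝ) else 0) +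
       (if u ∈ B ∧ v ∈ B ∧ u + v ∈ B then (1 : ℝ) else 0)) := by
    rw [Fintype.sum_prod_type, Finset.mul_sum]
    refine Finset.sum_congr rfl (fun u _ => ?_)
    rw [Fintype.sum_prod_type, Finset.mul_sum]
    refine Finset.sum_congr rfl (fun v _ => ?_)
    show ∑ _y : F,
      ((if u ∉ B ∧ v ∉ B ∧ u + v ∉ B then (1 : ℝ) else 0) +
       (if u ∈ B ∧ v ∈ B ∧ u + v ∈ B then (1 : ℝ) else 0)) = _
    rw [Finset.sum_const, Finset.card_univ, nsmul_eq_mul]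
  rw [step1]
  have dbl : ∑ u : F, ∑ v : F,
      ((if u ∉ B ∧ v ∉ B ∧ u + v ∉ B then (1 : ℝ) else 0) +
       (if u ∈ B ∧ v ∈ B ∧ u + v ∈ B then (1 : ℝ) else 0))
    = (Fintype.card F : ℝ) ^ 2 - 3 * (Fintype.card F : ℝ) * B.card + 3 * (B.card : ℝ) ^ 2 := by
    simp only [point]
    have Sbc : ∑ u : F, ∑ v : F,
        (if v ∈ B then (1:ℝ) else 0) * (if u + v ∈ B then (1:ℝ) else 0)
        = (B.card : ℝ) ^ 2 := by
      rw [Finset.sum_comm]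
      have : ∀ v : F, ∑ u : F,
          (if v ∈ B then (1:ℝ) else 0) * (if u + v ∈ B then (1:ℝ) else 0)
          = (if v ∈ B then (1:ℝ) else 0) * (B.card : ℝ) := by
        intro v
        rw [← Finset.mul_sum]
        congr 1
        calc ∑ u : F, (if u + v ∈ B then (1:ℝ) else 0)
            = ∑ u : F, (if v + u ∈ B then (1:ℝ) else 0) := by
              refine Finset.sum_congr rfl (fun u _ => ?_)
              rw [add_comm]
          _ = (B.card : ℝ) := sum_shift B v
      simp only [this]
      rw [← Finset.sum_mul, hB, sq]
    have inner : ∀ u : F,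
        ∑ v : F, ((1:ℝ) - (if u ∈ B then (1:ℝ) else 0) - (if v ∈ B then (1:ℝ) else 0)
          - (if u + v ∈ B then (1:ℝ) else 0)
          + (if u ∈ B then (1:ℝ) else 0) * (if v ∈ B then (1:ℝ) else 0)
          + (if u ∈ B then (1:ℝ) else 0) * (if u + v ∈ B then (1:ℝ) else 0)
          + (if v ∈ B then (1:ℝ) else 0) * (if u + v ∈ B then (1:ℝ) else 0))
        = (Fintype.card F : ℝ) - (Fintype.card F : ℝ) * (if u ∈ B then (1:ℝ) else 0)
          - (B.card : ℝ) - (B.card : ℝ)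
          + (if u ∈ B then (1:ℝ) else 0) * (B.card : ℝ)
          + (if u ∈ B then (1:ℝ) else 0) * (B.card : ℝ)
          + ∑ v : F, (if v ∈ B then (1:ℝ) else 0) * (if u + v ∈ B then (1:ℝ) else 0) := by
      intro u
      simp only [Finset.sum_add_distrib, Finset.sum_sub_distrib, Finset.sum_const,
        Finset.card_univ, nsmul_eq_mul, mul_one, ← Finset.mul_sum, hB, sum_shift B u]
    simp only [inner]
    simp only [Finset.sum_add_distrib, Finset.sum_sub_distrib, Finset.sum_const,
      Finset.card_univ, nsmul_eq_mul, ← Finset.sum_mul, ← Finset.mul_sum, hB, Sbc]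
    ring
  rw [dbl]
  ring

theorem triangle_reciprocity
    (F : Type) [AddCommGroup F] [Fintype F] [DecidableEq F]
    (A : Finset F) (hA : ∀ a ∈ A, -a ∈ A) :
    (Nat.card {p : F × F × F //
          p.1 - p.2.1 ∈ A ∧ p.2.1 - p.2.2 ∈ A ∧ p.1 - p.2.2 ∈ A} : ℝ) /
        (Fintype.card F : ℝ) ^ 3 +
      (Nat.card {p : F × F × F //
          p.1 - p.2.1 ∈ Aᶜ ∧ p.2.1 - p.2.2 ∈ Aᶜ ∧ p.1 - p.2.2 ∈ Aᶜ} : ℝ) /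
        (Fintype.card F : ℝ) ^ 3
      = 1 - 3 * ((Aᶜ.card : ℝ) / (Fintype.card F : ℝ))
          + 3 * ((Aᶜ.card : ℝ) / (Fintype.card F : ℝ)) ^ 2 := by
  classical
  have hf0 : (0 : ℝ) < (Fintype.card F : ℝ) := by
    exact_mod_cast Fintype.card_pos
  rw [card_subtype_real, card_subtype_real, ← add_div, ← Finset.sum_add_distrib]
  have hkey := key_count (F := F) Aᶜ
  have hre : (∑ p : F × F × F,
      ((if p.1 - p.2.1 ∈ A ∧ p.2.1 - p.2.2 ∈ A ∧ p.1 - p.2.2 ∈ A then (1 : ℝ) else 0) +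
       (if p.1 - p.2.1 ∈ Aᶜ ∧ p.2.1 - p.2.2 ∈ Aᶜ ∧ p.1 - p.2.2 ∈ Aᶜ then (1 : ℝ) else 0)))
    = ∑ p : F × F × F,
      ((if p.1 - p.2.1 ∉ Aᶜ ∧ p.2.1 - p.2.2 ∉ Aᶜ ∧ p.1 - p.2.2 ∉ Aᶜ then (1 : ℝ) else 0) +
       (if p.1 - p.2.1 ∈ Aᶜ ∧ p.2.1 - p.2.2 ∈ Aᶜ ∧ p.1 - p.2.2 ∈ Aᶜ then (1 : ℝ) else 0)) := by
    simp only [Finset.mem_compl, not_not]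
  rw [hre, hkey]
  field_simp
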